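/- Suppose G contains a directed path from vertex i to vertex j, and F is a maximum out forest of G containing no path from i to j. Then either F contains an arc (k,j) for some k ≠ i, or i is reachable from j in F. -/

import Mathlib

/-- The arc relation of a finite arc set. -/
def arcRel {V : Type*} [DecidableEq V] (F : Finset (V × V)) : V → V → Prop :=
  fun a b => (a, b) ∈ F

/-- A diverging forest: no directed cycles, and every vertex has in-degree at most 1. -/
def IsDivForest {V : Type*} [DecidableEq V] (F : Finset (V × V)) : Prop :=
  (∀ v, ¬ Relation.TransGen (arcRel F) v v) ∧
  ∀ w z₁ z₂, (z₁, w) ∈ F → (z₂, w) ∈ F → z₁ = z₂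

/-- A maximum out forest of the digraph with arc set `E`. -/
def IsMaxOutForest {V : Type*} [DecidableEq V] (E F : Finset (V × V)) : Prop :=
  F ⊆ E ∧ IsDivForest F ∧
  ∀ F' : Finset (V × V), F' ⊆ E → IsDivForest F' → F'.card ≤ F.card

open Relation

/-- Any reflexive-transitive path in `insert (c,t) F0` either witnesses reachability
from `t` in `F0` (once the new arc is used) or lies entirely in `F0`. -/
lemma lemE {V : Type*} [DecidableEq V] {F0 : Finset (V × V)} {c t x y : V}
    (h : Relation.ReflTransGen (arcRel (insert (c, t) F0)) x y) :
    Relation.ReflTransGen (arcRel F0) t y ∨ Relation.ReflTransGen (arcRel F0) x y := by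
  induction h with
  | refl => exact Or.inr .refl
  | tail hz harc ih =>
      have harc' : (_, _) ∈ insert (c, t) F0 := harc
      rcases Finset.mem_insert.1 harc' with he | hm
      · injection he with h1 h2
        subst h2
        exact Or.inl .refl
      · rcases ih with h3 | h3
        · exact Or.inl (h3.tail hm)
        · exact Or.inr (h3.tail hm)

/-- Decomposition of transitive paths in `insert (c,t) F0`. -/
lemma claimK {V : Type*} [DecidableEq V] {F0 : Finset (V × V)} {c t x y : V}
    (h : Relation.TransGen (arcRel (insert (c, t) F0)) x y) :
    Relation.TransGen (arcRel F0) x y ∨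
      (Relation.ReflTransGen (arcRel (insert (c, t) F0)) x c ∧
        Relation.ReflTransGen (arcRel F0) t y) := by
  induction h with
  | single h' =>
      have h'' : (_, _) ∈ insert (c, t) F0 := h'
      rcases Finset.mem_insert.1 h'' with he | hm
      · injection he with h1 h2
        subst h1; subst h2
        exact Or.inr ⟨.refl, .refl⟩
      · exact Or.inl (.single hm)
  | tail hz harc ih =>
      have harc' : (_, _) ∈ insert (c, t) F0 := harc
      rcases Finset.mem_insert.1 harc' with he | hm
      · injection he with h1 h2
        subst h1; subst h2
        exact Or.inr ⟨hz.to_reflTransGen, .refl⟩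
      · rcases ih with h3 | ⟨r1, r2⟩
        · exact Or.inl (h3.tail hm)
        · exact Or.inr ⟨r1, r2.tail hm⟩

/-- If `t` has in-degree 0 in `F` and `c` is not `F`-reachable from `t`, then adding the
arc `(c,t)` gives a strictly larger diverging forest, contradicting maximality. -/
lemma addArc {V : Type*} [DecidableEq V] {E F : Finset (V × V)} {c t : V}
    (hFE : F ⊆ E) (hforest : IsDivForest F)
    (hmax : ∀ F' : Finset (V × V), F' ⊆ E → IsDivForest F' → F'.card ≤ F.card)
    (hdeg : ∀ w, (w, t) ∉ F) (hE : (c, t) ∈ E)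
    (hnr : ¬ Relation.ReflTransGen (arcRel F) t c) : False := by
  set F2 : Finset (V × V) := insert (c, t) F with hF2
  have hsub : F2 ⊆ E := Finset.insert_subset hE hFE
  have hacyc : ∀ v, ¬ Relation.TransGen (arcRel F2) v v := by
    intro v hv
    rcases claimK hv with h | ⟨h1, h2⟩
    · exact hforest.1 v h
    · rcases lemE h1 with h3 | h3
      · exact hnr h3
      · exact hnr (h2.trans h3)
  have huniq : ∀ w z₁ z₂, (z₁, w) ∈ F2 → (z₂, w) ∈ F2 → z₁ = z₂ := by
    intro w z₁ z₂ h1 h2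
    rcases Finset.mem_insert.1 h1 with he1 | hm1 <;>
      rcases Finset.mem_insert.1 h2 with he2 | hm2
    · injection he1 with a1 b1; injection he2 with a2 b2; rw [a1, a2]
    · injection he1 with a1 b1; subst b1; exact absurd hm2 (hdeg z₂)
    · injection he2 with a2 b2; subst b2; exact absurd hm1 (hdeg z₁)
    · exact hforest.2 w z₁ z₂ hm1 hm2
  have hle : F2.card ≤ F.card := hmax F2 hsub ⟨hacyc, huniq⟩
  have hcard : F2.card = F.card + 1 :=
    Finset.card_insert_of_notMem (fun h => hdeg c h)
  omega

/-- The swap step: replace `c`'s in-arc `(q,c)` by the arc `(c,t)`. The result is again a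
maximum diverging forest in which `c` has in-degree 0 and `i` is still unreachable. -/
lemma swapStep {V : Type*} [DecidableEq V] {E F : Finset (V × V)} {c t q i : V}
    (hFE : F ⊆ E) (hforest : IsDivForest F)
    (hmax : ∀ F' : Finset (V × V), F' ⊆ E → IsDivForest F' → F'.card ≤ F.card)
    (hdeg : ∀ w, (w, t) ∉ F) (hti : ¬ Relation.ReflTransGen (arcRel F) t i)
    (hE : (c, t) ∈ E) (hct : c ≠ t)
    (htc : Relation.ReflTransGen (arcRel F) t c) (hq : (q, c) ∈ F) :
    ∃ F2 : Finset (V × V), F2 ⊆ E ∧ IsDivForest F2 ∧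
      (∀ F' : Finset (V × V), F' ⊆ E → IsDivForest F' → F'.card ≤ F2.card) ∧
      (∀ w, (w, c) ∉ F2) ∧ ¬ Relation.ReflTransGen (arcRel F2) c i := by
  set F0 : Finset (V × V) := F.erase (q, c) with hF0
  set F2 : Finset (V × V) := insert (c, t) F0 with hF2
  have hF0F : F0 ⊆ F := Finset.erase_subset _ _
  have hmono : ∀ a b : V, arcRel F0 a b → arcRel F a b := fun a b hab => hF0F hab
  have hsub : F2 ⊆ E := Finset.insert_subset hE (hF0F.trans hFE)
  -- c has no in-arc in F2
  have noin : ∀ w, (w, c) ∉ F2 := by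
    intro w hw
    rcases Finset.mem_insert.1 hw with he | hm
    · injection he with a b; exact hct b
    · have hm' : (w, c) ∈ F := hF0F hm
      have : w = q := hforest.2 c w q hm' hq
      subst this
      exact (Finset.notMem_erase _ _) hm
  -- acyclicity
  have hacyc : ∀ v, ¬ Relation.TransGen (arcRel F2) v v := by
    intro v hv
    rcases claimK hv with h | ⟨h1, h2⟩
    · exact hforest.1 v (Relation.TransGen.mono hmono _ _ h)
    · rcases h1.cases_tail with he | ⟨w, _, hw⟩
      · subst he
        rcases (Relation.TransGen.tail'_iff.1 hv) with ⟨b, _, hb⟩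
        exact noin b hb
      · exact noin w hw
  -- unique in-arcs
  have huniq : ∀ w z₁ z₂, (z₁, w) ∈ F2 → (z₂, w) ∈ F2 → z₁ = z₂ := by
    intro w z₁ z₂ h1 h2
    rcases Finset.mem_insert.1 h1 with he1 | hm1 <;>
      rcases Finset.mem_insert.1 h2 with he2 | hm2
    · injection he1 with a1 b1; injection he2 with a2 b2; rw [a1, a2]
    · injection he1 with a1 b1; subst b1; exact absurd (hF0F hm2) (hdeg z₂)
    · injection he2 with a2 b2; subst b2; exact absurd (hF0F hm1) (hdeg z₁)
    · exact hforest.2 w z₁ z₂ (hF0F hm1) (hF0F hm2)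
  -- same cardinality
  have hctF0 : (c, t) ∉ F0 := fun h => hdeg c (hF0F h)
  have h1le : 1 ≤ F.card := Finset.card_pos.2 ⟨(q, c), hq⟩
  have hcard : F2.card = F.card := by
    rw [hF2, Finset.card_insert_of_notMem hctF0, hF0, Finset.card_erase_of_mem hq]
    omega
  have hmax2 : ∀ F' : Finset (V × V), F' ⊆ E → IsDivForest F' → F'.card ≤ F2.card := by
    intro F' hs hd
    rw [hcard]
    exact hmax F' hs hd
  -- i is unreachable from c in F2
  have hci : ¬ Relation.ReflTransGen (arcRel F2) c i := by
    intro h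
    rcases lemE h with h3 | h3
    · exact hti (Relation.ReflTransGen.mono hmono _ _ h3)
    · exact hti (htc.trans (Relation.ReflTransGen.mono hmono _ _ h3))
  exact ⟨F2, hsub, ⟨hacyc, huniq⟩, hmax2, noin, hci⟩

/-- Key induction along a (reversed) arc chain from `t` back to `i`. -/
lemma key {V : Type*} [DecidableEq V] (E : Finset (V × V)) (i : V) :
    ∀ (l : List V) (F : Finset (V × V)) (t : V),
      F ⊆ E → IsDivForest F →
      (∀ F' : Finset (V × V), F' ⊆ E → IsDivForest F' → F'.card ≤ F.card) →
      (∀ w, (w, t) ∉ F) → ¬ Relation.ReflTransGen (arcRel F) t i →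
      List.Chain (flip (arcRel E)) t (l ++ [i]) → False := by
  intro l
  induction l with
  | nil =>
      intro F t hFE hforest hmax hdeg hti hchain
      rw [List.nil_append] at hchain; replace hchain := List.isChain_cons_cons.1 hchain
      exact addArc hFE hforest hmax hdeg hchain.1 hti
  | cons c l' ih =>
      intro F t hFE hforest hmax hdeg hti hchain
      rw [List.cons_append] at hchain; replace hchain := List.isChain_cons_cons.1 hchain
      obtain ⟨harc, hchain'⟩ := hchain
      have hE : (c, t) ∈ E := harc
      by_cases hr : Relation.ReflTransGen (arcRel F) t c
      · by_cases hct : c = t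
        · subst hct
          exact ih F c hFE hforest hmax hdeg hti hchain'
        · rcases hr.cases_tail with he | ⟨q, _, hq⟩
          · exact (hct he).elim
          · obtain ⟨F2, p1, p2, p3, p4, p5⟩ :=
              swapStep hFE hforest hmax hdeg hti hE hct hr hq
            exact ih F2 c p1 p2 p3 p4 p5 hchain'
      · exact addArc hFE hforest hmax hdeg hE hr

/-- A transitive path gives a reversed chain. -/
lemma toChain {V : Type*} {r : V → V → Prop} {i j : V}
    (h : Relation.TransGen r i j) :
    ∃ l : List V, List.Chain (flip r) j (l ++ [i]) := by
  induction h with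
  | single h' => exact ⟨[], List.Chain.cons h' List.Chain.nil⟩
  | tail hp harc ih =>
      obtain ⟨l, hl⟩ := ih
      exact ⟨_ :: l, List.Chain.cons harc hl⟩

theorem stmt4 {V : Type*} [DecidableEq V] (E F : Finset (V × V)) (i j : V)
    (hF : IsMaxOutForest E F)
    (hpathG : Relation.TransGen (arcRel E) i j)
    (hnopathF : ¬ Relation.ReflTransGen (arcRel F) i j) :
    (∃ k, k ≠ i ∧ (k, j) ∈ F) ∨ Relation.ReflTransGen (arcRel F) j i := by
  by_contra hcon
  push_neg at hcon
  obtain ⟨h1, h2⟩ := hcon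
  have hdeg : ∀ w, (w, j) ∉ F := by
    intro w hw
    by_cases hwi : w = i
    · subst hwi
      exact hnopathF (Relation.ReflTransGen.single hw)
    · exact h1 w hwi hw
  obtain ⟨l, hl⟩ := toChain hpathG
  exact key E i l F j hF.1 hF.2.1 hF.2.2 hdeg h2 hl
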